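/- Fix an integer n ≥ 1. For each integer m ≥ 1 let q(m) be the unique natural number k such that binom(k−1+n, n) < m ≤ binom(k+n, n) (with the convention binom(n−1, n) = 0), and set Q(m) = q(1) + q(2) + ⋯ + q(m). Then for every m ≥ 1, Q(m) ≥ (n!)^{1/n} · (n/(n+1)) · m^{(n+1)/n} − ((n+3)/(2n+2)) · n · m. -/

import Mathlib

open Finset Real

private lemma ascFact_prod (q : ℕ) : ∀ n : ℕ, (q+1).ascFactorial n = ∏ j ∈ Finset.range n, (q+1+j)
  | 0 => by simp
  | (n+1) => by
    rw [Nat.ascFactorial_succ, Finset.prod_range_succ, ascFact_prod q n, Nat.mul_comm]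

private lemma amgm_bound (q n : ℕ) (hn : 1 ≤ n) :
    ((q+1).ascFactorial n : ℝ) ≤ ((q : ℝ) + ((n : ℝ)+1)/2) ^ n := by
  have hn0 : (n : ℝ) ≠ 0 := by positivity
  set z : ℕ → ℝ := fun j => (q : ℝ) + 1 + j with hz
  have hzpos : ∀ j ∈ Finset.range n, (0:ℝ) ≤ z j := by
    intro j _; positivity
  have hgm := Real.geom_mean_le_arith_mean_weighted (Finset.range n)
      (fun _ => 1 / (n : ℝ)) z (fun i _ => by positivity)
      (by simp [Finset.sum_const, mul_one_div, hn0]) hzpos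
  have hsum : ∑ i ∈ Finset.range n, (1 / (n : ℝ)) * z i = (q : ℝ) + ((n : ℝ)+1)/2 := by
    rw [← Finset.mul_sum]
    have : ∑ i ∈ Finset.range n, z i = n * ((q:ℝ)+1) + (n * (n-1))/2 := by
      simp only [hz, Finset.sum_add_distrib, Finset.sum_const, Finset.card_range,
        nsmul_eq_mul]
      have hg := Finset.sum_range_id_mul_two n
      have h2 := congrArg (Nat.cast : ℕ → ℝ) hg
      push_cast [Nat.cast_sub hn] at h2
      linarith
    rw [this]
    field_simp
    ring
  rw [hsum] at hgm
  have hprodrw : ∏ i ∈ Finset.range n, z i ^ (1 / (n:ℝ)) =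
      (∏ i ∈ Finset.range n, z i) ^ (1 / (n:ℝ)) := by
    rw [← Real.finset_prod_rpow _ _ hzpos]
  rw [hprodrw] at hgm
  have hP : (0:ℝ) ≤ ∏ i ∈ Finset.range n, z i := Finset.prod_nonneg hzpos
  have key : ∏ i ∈ Finset.range n, z i ≤ ((q : ℝ) + ((n : ℝ)+1)/2) ^ n := by
    have := pow_le_pow_left₀ (Real.rpow_nonneg hP _) hgm n
    rwa [← Real.rpow_natCast ((∏ i ∈ Finset.range n, z i) ^ (1 / (n:ℝ))) n,
      ← Real.rpow_mul hP, one_div, inv_mul_cancel₀ hn0, Real.rpow_one] at this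
  calc ((q+1).ascFactorial n : ℝ) = ∏ i ∈ Finset.range n, z i := by
        rw [ascFact_prod]
        push_cast
        exact Finset.prod_congr rfl (fun j _ => by simp [hz])
    _ ≤ _ := key

private lemma sum_rpow_lb (n : ℕ) (hn : 1 ≤ n) : ∀ m : ℕ,
    (n:ℝ)/((n:ℝ)+1) * (m:ℝ) ^ (((n:ℝ)+1)/n) ≤ ∑ i ∈ Finset.Icc 1 m, (i:ℝ) ^ ((1:ℝ)/n)
  | 0 => by
    simp [Real.zero_rpow (by positivity : ((n:ℝ)+1)/n ≠ 0)]
  | (m+1) => by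
    have hn0 : (n : ℝ) ≠ 0 := by positivity
    have hp1 : (1:ℝ) ≤ ((n:ℝ)+1)/n := by
      rw [le_div_iff₀ (by positivity)]; linarith
    set p : ℝ := ((n:ℝ)+1)/n with hp
    have ih := sum_rpow_lb n hn m
    rw [Finset.sum_Icc_succ_top (by omega : 1 ≤ m+1)]
    have hlt : (m:ℝ) < (m:ℝ)+1 := by linarith
    obtain ⟨c, hc, hder⟩ := exists_hasDerivAt_eq_slope (fun x => x ^ p) (fun x => p * x ^ (p-1))
      hlt
      (by
        apply ContinuousOn.rpow_const continuousOn_id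
        intro x _; right; linarith)
      (fun x _ => Real.hasDerivAt_rpow_const (Or.inr hp1))
    have hc0 : 0 ≤ c := le_trans (Nat.cast_nonneg m) hc.1.le
    have hcb : c ^ (p-1) ≤ ((m:ℝ)+1) ^ (p-1) := by
      apply Real.rpow_le_rpow hc0 hc.2.le (by linarith)
    have hslope : (((m:ℝ)+1) ^ p - (m:ℝ) ^ p) = p * c ^ (p-1) := by
      have := hder
      field_simp at this
      linarith [this]
    have hpm1 : p - 1 = 1/(n:ℝ) := by
      rw [hp]; field_simp; ring
    rw [hpm1] at hcb hslope
    have key : (n:ℝ)/((n:ℝ)+1) * (((m:ℝ)+1) ^ p - (m:ℝ) ^ p) ≤ ((m:ℝ)+1) ^ ((1:ℝ)/n) := by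
      rw [hslope]
      have h1 : (n:ℝ)/((n:ℝ)+1) * (p * c ^ ((1:ℝ)/n)) = c ^ ((1:ℝ)/n) := by
        rw [hp]; field_simp
      rw [h1]
      exact hcb
    push_cast
    nlinarith [key, ih]

theorem hilbert_samuel_sum_lower_bound (n : ℕ) (hn : 1 ≤ n) (q : ℕ → ℕ)
    (hq : ∀ m : ℕ, 1 ≤ m →
      m ≤ (q m + n).choose n ∧ ∀ k : ℕ, m ≤ (k + n).choose n → q m ≤ k)
    (Q : ℕ → ℕ) (hQ : ∀ m : ℕ, Q m = ∑ i ∈ Finset.Icc 1 m, q i) :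
    ∀ m : ℕ, 1 ≤ m →
      (n.factorial : ℝ) ^ ((1 : ℝ) / n) * ((n : ℝ) / ((n : ℝ) + 1)) *
          (m : ℝ) ^ (((n : ℝ) + 1) / n)
        - (((n : ℝ) + 3) / (2 * (n : ℝ) + 2)) * (n : ℝ) * (m : ℝ) ≤ (Q m : ℝ) := by
  intro m hm
  have hn0 : (n : ℝ) ≠ 0 := by positivity
  -- per-term bound
  have hterm : ∀ i : ℕ, 1 ≤ i →
      (n.factorial : ℝ) ^ ((1:ℝ)/n) * (i:ℝ) ^ ((1:ℝ)/n) ≤ (q i : ℝ) + ((n:ℝ)+1)/2 := by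
    intro i hi
    have h1 : i ≤ (q i + n).choose n := (hq i hi).1
    have h2 : (n.factorial * i : ℝ) ≤ ((q i : ℝ) + ((n:ℝ)+1)/2) ^ n := by
      calc (n.factorial * i : ℝ) ≤ (n.factorial * (q i + n).choose n : ℕ) := by
            push_cast
            have h1' : (i:ℝ) ≤ ((q i + n).choose n : ℝ) := by exact_mod_cast h1
            have : (0:ℝ) ≤ (n.factorial : ℝ) := by positivity
            nlinarith
        _ = ((q i + 1).ascFactorial n : ℕ) := by
            rw [Nat.ascFactorial_eq_factorial_mul_choose]
        _ ≤ _ := amgm_bound (q i) n hn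
    have h3 := Real.rpow_le_rpow (by positivity) h2 (by positivity : (0:ℝ) ≤ ((n:ℝ))⁻¹)
    rw [Real.mul_rpow (by positivity) (by positivity),
      Real.pow_rpow_inv_natCast (by positivity) (by omega)] at h3
    simpa [one_div] using h3
  have hsum := sum_rpow_lb n hn m
  have hQm : (Q m : ℝ) = ∑ i ∈ Finset.Icc 1 m, (q i : ℝ) := by
    rw [hQ m]; push_cast; try rfl
  have hcard : (Finset.Icc 1 m).card = m := by simp
  have hstep : (n.factorial : ℝ) ^ ((1:ℝ)/n) * ∑ i ∈ Finset.Icc 1 m, (i:ℝ) ^ ((1:ℝ)/n)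
      ≤ (Q m : ℝ) + (((n:ℝ)+1)/2) * m := by
    rw [hQm, Finset.mul_sum]
    have : ∑ i ∈ Finset.Icc 1 m, ((n.factorial : ℝ) ^ ((1:ℝ)/n) * (i:ℝ) ^ ((1:ℝ)/n))
        ≤ ∑ i ∈ Finset.Icc 1 m, ((q i : ℝ) + ((n:ℝ)+1)/2) := by
      apply Finset.sum_le_sum
      intro i hi
      exact hterm i (Finset.mem_Icc.mp hi).1
    rw [Finset.sum_add_distrib, Finset.sum_const, hcard, nsmul_eq_mul] at this
    linarith
  have hfac : (0:ℝ) ≤ (n.factorial : ℝ) ^ ((1:ℝ)/n) := Real.rpow_nonneg (by positivity) _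
  have hmain : (n.factorial : ℝ) ^ ((1:ℝ)/n) * ((n:ℝ)/((n:ℝ)+1) * (m:ℝ) ^ (((n:ℝ)+1)/n))
      ≤ (Q m : ℝ) + (((n:ℝ)+1)/2) * m := le_trans (by gcongr) hstep
  -- coefficient comparison: (n+1)/2 ≤ n(n+3)/(2n+2)
  have hcoef : ((n:ℝ)+1)/2 ≤ (((n:ℝ)+3)/(2*(n:ℝ)+2)) * n := by
    rw [div_le_iff₀ (by positivity), div_mul_eq_mul_div, div_mul_eq_mul_div,
      le_div_iff₀ (by positivity : (0:ℝ) < 2*(n:ℝ)+2)]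
    have h1 : (1:ℝ) ≤ n := by exact_mod_cast hn
    nlinarith
  have hmpos : (0:ℝ) ≤ (m:ℝ) := Nat.cast_nonneg m
  nlinarith [mul_le_mul_of_nonneg_right hcoef hmpos]
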